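/- The function Z := w^{(p+1)/2} satisfies the linearized eigenvalue equation Z'' − Z + p w^{p−1} Z = λ₀ Z on ℝ, where λ₀ = (1/4)(p−1)(p+3). -/

import Mathlib

open Real Filter

lemma alg_key (p A B W Wp Wp1 Wm1 Wc1 Wc2 v dd : ℝ)
    (hp : (0:ℝ) < p + 1)
    (hdd : dd = W - Wp)
    (hv : v * v = W * W - (2 / (p + 1)) * Wp1)
    (e1 : Wc1 * W = A) (e2 : Wc1 * Wp = B) (e3 : Wc2 * (W * W) = A)
    (e4 : Wc2 * Wp1 = B) (e5 : Wm1 * A = B) :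
    dd * ((p+1)/2) * Wc1 + (v * ((p+1)/2)) * (v * ((p+1)/2 - 1) * Wc2)
      - A + p * Wm1 * A = (1/4) * (p-1) * (p+3) * A := by
  have hne : p + 1 ≠ 0 := hp.ne'
  have hv' : (p+1) * (v * v) = (p+1) * (W * W) - 2 * Wp1 := by
    rw [hv]; field_simp
  rw [mul_assoc p, e5, hdd]
  linear_combination (norm := (field_simp; ring))
    (((p+1)/2) * (((p+1)/2) - 1) * Wc2 / (p+1)) * hv' +
    ((p+1)/2) * e1 - ((p+1)/2) * e2 + (((p+1)/2) * (((p+1)/2) - 1)) * e3 -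
    (((p-1)/2)) * e4

lemma energy_identity
    (p : ℝ) (hp : 1 < p) (w : ℝ → ℝ)
    (hw_pos : ∀ x, 0 < w x)
    (hw_smooth : ContDiff ℝ 2 w)
    (hw_eq : ∀ x, deriv (deriv w) x - w x + w x ^ p = 0)
    (hdecay : ∃ C₀ > (0:ℝ), ∃ a > (0:ℝ),
      ∀ x : ℝ, w x + |deriv w x| ≤ C₀ * Real.exp (-a * |x|)) :
    ∀ x, (deriv w x) ^ 2 = (w x) ^ 2 - (2 / (p + 1)) * w x ^ (p + 1) := by
  have hp1 : (0:ℝ) < p + 1 := by linarith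
  have hd : Differentiable ℝ w := hw_smooth.differentiable (by norm_num)
  have hd' : Differentiable ℝ (deriv w) := by
    have h2 : ContDiff ℝ ((1 : ℕ) + 1) w := by exact_mod_cast hw_smooth
    exact ((contDiff_succ_iff_deriv.mp h2).2.2).differentiable (by norm_num)
  set E : ℝ → ℝ := fun x => (deriv w x) ^ 2 - (w x) ^ 2 + (2 / (p + 1)) * w x ^ (p + 1)
    with hE_def
  have hder : ∀ x, HasDerivAt E 0 x := by
    intro x
    have hw' : HasDerivAt w (deriv w x) x := (hd x).hasDerivAt
    have hw'' : HasDerivAt (deriv w) (deriv (deriv w) x) x := (hd' x).hasDerivAt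
    have hpow : HasDerivAt (fun y => w y ^ (p + 1))
        (deriv w x * (p + 1) * w x ^ (p + 1 - 1)) x :=
      hw'.rpow_const (Or.inl (hw_pos x).ne')
    have h := ((hw''.pow 2).sub (hw'.pow 2)).add (hpow.const_mul (2 / (p + 1)))
    refine h.congr_deriv ?_
    have heq := hw_eq x
    have hdd : deriv (deriv w) x = w x - w x ^ p := by linarith
    have hx : w x ^ (p + 1 - 1) = w x ^ p := by ring_nf
    rw [hx, hdd]
    field_simp
    ring
  have hconst : ∀ x y, E x = E y :=
    fun x y => is_const_of_deriv_eq_zero (fun z => (hder z).differentiableAt)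
      (fun z => (hder z).deriv) x y
  obtain ⟨C₀, hC₀, a, ha, hbound⟩ := hdecay
  have hup : Tendsto (fun x : ℝ => C₀ * Real.exp (-a * |x|)) atTop (nhds 0) := by
    have h1 : Tendsto (fun x : ℝ => -a * |x|) atTop atBot :=
      Tendsto.const_mul_atTop_of_neg (by linarith) tendsto_abs_atTop_atTop
    simpa using (Real.tendsto_exp_atBot.comp h1).const_mul C₀
  have hw0 : Tendsto w atTop (nhds 0) := by
    refine squeeze_zero (fun x => (hw_pos x).le) (fun x => ?_) hup
    have := hbound x
    have := abs_nonneg (deriv w x)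
    linarith
  have hw'0 : Tendsto (deriv w) atTop (nhds 0) := by
    have habs : Tendsto (fun x => |deriv w x|) atTop (nhds 0) := by
      refine squeeze_zero (fun x => abs_nonneg _) (fun x => ?_) hup
      have := hbound x
      have := (hw_pos x).le
      linarith
    exact (tendsto_zero_iff_abs_tendsto_zero _).mpr habs
  have hpow0 : Tendsto (fun x => w x ^ (p + 1)) atTop (nhds 0) := by
    have hc : ContinuousAt (fun t : ℝ => t ^ (p + 1)) 0 :=
      Real.continuousAt_rpow_const 0 (p + 1) (Or.inr hp1.le)
    have := hc.tendsto.comp hw0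
    simpa [Real.zero_rpow hp1.ne', Function.comp_def] using this
  have hE0 : Tendsto E atTop (nhds 0) := by
    have : Tendsto E atTop (nhds ((0:ℝ) ^ 2 - 0 ^ 2 + (2 / (p + 1)) * 0)) :=
      (((hw'0.pow 2).sub (hw0.pow 2)).add (hpow0.const_mul _))
    simpa using this
  intro x
  have hEx0 : E x = 0 := by
    have hc : Tendsto E atTop (nhds (E x)) := by
      have hEc : E = fun _ => E x := funext fun y => hconst y x
      rw [hEc]; exact tendsto_const_nhds
    exact tendsto_nhds_unique hc hE0
  simp only [hE_def] at hEx0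
  linarith

theorem eigenfunction_of_linearized_operator
    (p : ℝ) (hp : 1 < p) (w : ℝ → ℝ)
    (hw_pos : ∀ x, 0 < w x)
    (hw_smooth : ContDiff ℝ 2 w)
    (hw_eq : ∀ x, deriv (deriv w) x - w x + w x ^ p = 0)
    (hdecay : ∃ C₀ > (0:ℝ), ∃ a > (0:ℝ),
      ∀ x : ℝ, w x + |deriv w x| ≤ C₀ * Real.exp (-a * |x|)) :
    ∀ x : ℝ,
      deriv (deriv (fun y => w y ^ ((p + 1) / 2))) x
        - w x ^ ((p + 1) / 2)
        + p * w x ^ (p - 1) * (w x ^ ((p + 1) / 2))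
      = (1 / 4) * (p - 1) * (p + 3) * (w x ^ ((p + 1) / 2)) := by
  have hp1 : (0:ℝ) < p + 1 := by linarith
  have hd : Differentiable ℝ w := hw_smooth.differentiable (by norm_num)
  have hd' : Differentiable ℝ (deriv w) := by
    have h2 : ContDiff ℝ ((1 : ℕ) + 1) w := by exact_mod_cast hw_smooth
    exact ((contDiff_succ_iff_deriv.mp h2).2.2).differentiable (by norm_num)
  have hEn := energy_identity p hp w hw_pos hw_smooth hw_eq hdecay
  set c : ℝ := (p + 1) / 2 with hc_def
  -- first derivative of Z
  have hZ1 : ∀ x, HasDerivAt (fun y => w y ^ c)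
      (deriv w x * c * w x ^ (c - 1)) x := fun x =>
    ((hd x).hasDerivAt).rpow_const (Or.inl (hw_pos x).ne')
  have hderivZ : deriv (fun y => w y ^ c) = fun x => deriv w x * c * w x ^ (c - 1) :=
    funext fun x => (hZ1 x).deriv
  intro x
  have hw' : HasDerivAt w (deriv w x) x := (hd x).hasDerivAt
  have hw'' : HasDerivAt (deriv w) (deriv (deriv w) x) x := (hd' x).hasDerivAt
  -- second derivative
  have hZ2 : HasDerivAt (fun y => deriv w y * c * w y ^ (c - 1))
      (deriv (deriv w) x * c * w x ^ (c - 1)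
        + deriv w x * c * (deriv w x * (c - 1) * w x ^ (c - 1 - 1))) x := by
    have h1 : HasDerivAt (fun y => deriv w y * c) (deriv (deriv w) x * c) x :=
      hw''.mul_const c
    have h2 : HasDerivAt (fun y => w y ^ (c - 1))
        (deriv w x * (c - 1) * w x ^ (c - 1 - 1)) x :=
      hw'.rpow_const (Or.inl (hw_pos x).ne')
    exact h1.mul h2
  have hZ'' : deriv (deriv (fun y => w y ^ c)) x
      = deriv (deriv w) x * c * w x ^ (c - 1)
        + deriv w x * c * (deriv w x * (c - 1) * w x ^ (c - 1 - 1)) := by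
    rw [hderivZ]; exact hZ2.deriv
  rw [hZ'']
  set W := w x with hW_def
  have hW : 0 < W := hw_pos x
  have hdd : deriv (deriv w) x = W - W ^ p := by have := hw_eq x; linarith
  have hv : deriv w x * deriv w x = W * W - (2 / (p + 1)) * W ^ (p + 1) := by
    have := hEn x
    nlinarith [this]
  have hmul : ∀ a b : ℝ, W ^ a * W ^ b = W ^ (a + b) := fun a b =>
    (Real.rpow_add hW a b).symm
  have hW1 : W ^ (1:ℝ) = W := Real.rpow_one W
  have hW2 : W ^ (2:ℝ) = W * W := by
    rw [show (2:ℝ) = 1 + 1 by norm_num, Real.rpow_add hW, hW1]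
  have e1 : W ^ (c - 1) * W = W ^ c := by
    have h := hmul (c - 1) 1
    rw [hW1] at h
    rw [h]; ring_nf
  have e2 : W ^ (c - 1) * W ^ p = W ^ (c + p - 1) := by
    rw [hmul]; ring_nf
  have e3 : W ^ (c - 1 - 1) * (W * W) = W ^ c := by
    rw [← hW2, hmul]; ring_nf
  have e4 : W ^ (c - 1 - 1) * W ^ (p + 1) = W ^ (c + p - 1) := by
    rw [hmul]; ring_nf
  have e5 : W ^ (p - 1) * W ^ c = W ^ (c + p - 1) := by
    rw [hmul]; ring_nf
  rw [hc_def] at *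
  exact alg_key p (W ^ ((p+1)/2)) (W ^ ((p+1)/2 + p - 1)) W (W ^ p) (W ^ (p+1))
    (W ^ (p-1)) (W ^ ((p+1)/2 - 1)) (W ^ ((p+1)/2 - 1 - 1)) (deriv w x)
    (deriv (deriv w) x) hp1 hdd hv e1 e2 e3 e4 e5
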